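/- Let C be a non-empty compact convex subset of E contained in the hyperplane H = {x ∈ E : ⟨e, x⟩ = 1}, where e ∈ E is non-zero, and let K = {λu : λ ≥ 0, u ∈ C} be the cone generated by C. Then for every x ∈ H with x ∉ −K*, one has dist(x, C) ≤ ‖e‖·r·dist(x, K), where r = max{‖u‖ : u ∈ C}. -/

import Mathlib

open Metric Bornology RealInnerProductSpace


-- projection onto line: minimality
lemma proj_min {E : Type*} [NormedAddCommGroup E] [InnerProductSpace ℝ E]
    (x v : E) (hv : v ≠ 0) (s : ℝ) :
    ‖x - (⟪x, v⟫ / ‖v‖ ^ 2) • v‖ ≤ ‖x - s • v‖ := by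
  set t : ℝ := ⟪x, v⟫ / ‖v‖ ^ 2 with ht
  have hvv : ⟪v, v⟫ = ‖v‖ ^ 2 := real_inner_self_eq_norm_sq v
  have hv2 : (0:ℝ) < ‖v‖ ^ 2 := pow_pos (norm_pos_iff.mpr hv) 2
  have horth : ⟪x - t • v, v⟫ = 0 := by
    rw [inner_sub_left, real_inner_smul_left, hvv, ht, div_mul_cancel₀ _ (ne_of_gt hv2)]
    ring
  have hdecomp : x - s • v = (x - t • v) + (t - s) • v := by
    rw [sub_smul]; abel
  have : ‖x - s • v‖ ^ 2 = ‖x - t • v‖ ^ 2 + ‖(t - s) • v‖ ^ 2 := by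
    rw [hdecomp, norm_add_sq_real, real_inner_smul_right, horth]; ring
  refine le_of_pow_le_pow_left₀ two_ne_zero (norm_nonneg _) ?_
  rw [this]; nlinarith [sq_nonneg ‖(t - s) • v‖]

lemma key_ineq {E : Type*} [NormedAddCommGroup E] [InnerProductSpace ℝ E]
    (e x v : E) (hx : ⟪e, x⟫ = 1) (hv : ⟪e, v⟫ = 1) :
    ‖x - v‖ ≤ ‖e‖ * ‖v‖ * ‖x - (⟪x, v⟫ / ‖v‖ ^ 2) • v‖ := by
  have hv0 : v ≠ 0 := by rintro rfl; simp at hv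
  set t : ℝ := ⟪x, v⟫ / ‖v‖ ^ 2 with ht
  set a : E := x - t • v with ha
  have hvv : ⟪v, v⟫ = ‖v‖ ^ 2 := real_inner_self_eq_norm_sq v
  have hv2 : (0:ℝ) < ‖v‖ ^ 2 := pow_pos (norm_pos_iff.mpr hv0) 2
  have horth : ⟪a, v⟫ = 0 := by
    rw [ha, inner_sub_left, real_inner_smul_left, hvv, ht, div_mul_cancel₀ _ (ne_of_gt hv2)]
    ring
  have horth' : ⟪v, a⟫ = 0 := by rw [real_inner_comm]; exact horth
  have hea : ⟪e, a⟫ = 1 - t := by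
    rw [ha, inner_sub_right, real_inner_smul_right, hx, hv]; ring
  -- x - v = a + (t-1) • v, orthogonal decomposition
  have hdecomp : x - v = a + (t - 1) • v := by rw [ha]; module
  have pyth : ‖x - v‖ ^ 2 = ‖a‖ ^ 2 + (t - 1) ^ 2 * ‖v‖ ^ 2 := by
    rw [hdecomp, norm_add_sq_real, real_inner_smul_right, horth, norm_smul]
    simp [mul_pow]
    try ring
  -- Cauchy-Schwarz with e' = e - ‖v‖⁻² • v
  set e' : E := e - (‖v‖ ^ 2)⁻¹ • v with he'
  have hee' : ⟪e', a⟫ = ⟪e, a⟫ := by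
    rw [he', inner_sub_left, real_inner_smul_left, horth']; ring
  have hne' : ‖e'‖ ^ 2 = ‖e‖ ^ 2 - (‖v‖ ^ 2)⁻¹ := by
    have : ‖e'‖ ^ 2 = ⟪e', e'⟫ := (real_inner_self_eq_norm_sq e').symm
    have h5 : ⟪v, e⟫ = (1:ℝ) := by rw [real_inner_comm]; exact hv
    rw [this, he', inner_sub_sub_self, real_inner_smul_left, real_inner_smul_right,
      real_inner_smul_left, real_inner_smul_right, hvv, h5,
      real_inner_self_eq_norm_sq e]
    field_simp
    rw [hv]; ring
  have hcs : ⟪e', a⟫ ^ 2 ≤ ‖e'‖ ^ 2 * ‖a‖ ^ 2 := by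
    have := abs_real_inner_le_norm e' a
    calc ⟪e', a⟫ ^ 2 = |⟪e', a⟫| ^ 2 := (sq_abs _).symm
      _ ≤ (‖e'‖ * ‖a‖) ^ 2 := by
          exact pow_le_pow_left₀ (abs_nonneg _) this 2
      _ = ‖e'‖ ^ 2 * ‖a‖ ^ 2 := by ring
  have hbound : ‖x - v‖ ^ 2 ≤ (‖e‖ * ‖v‖ * ‖a‖) ^ 2 := by
    have h1 : (t - 1) ^ 2 = ⟪e', a⟫ ^ 2 := by rw [hee', hea]; ring
    have h2 : (t - 1) ^ 2 ≤ (‖e‖ ^ 2 - (‖v‖ ^ 2)⁻¹) * ‖a‖ ^ 2 := by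
      rw [h1, ← hne']; exact hcs
    have h3 : ‖x - v‖ ^ 2 ≤ ‖a‖ ^ 2 + (‖e‖ ^ 2 - (‖v‖ ^ 2)⁻¹) * ‖a‖ ^ 2 * ‖v‖ ^ 2 := by
      rw [pyth]; nlinarith [hv2]
    have h4 : (‖v‖ ^ 2)⁻¹ * ‖v‖ ^ 2 = 1 := inv_mul_cancel₀ (ne_of_gt hv2)
    nlinarith [h3, h4]
  refine le_of_pow_le_pow_left₀ two_ne_zero (by positivity) ?_
  exact hbound

/-- The dual cone of a set `S`. -/
def dualCone' {E : Type*} [NormedAddCommGroup E] [InnerProductSpace ℝ E] (S : Set E) :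
    Set E := {y | ∀ x ∈ S, 0 ≤ ⟪y, x⟫}

/-- Proposition 4.2: if `C` is a compact convex subset of the hyperplane
`{x : ⟪e, x⟫ = 1}` generating the cone `K`, then for every `x` in the hyperplane with
`x ∉ -K*` one has `dist(x, C) ≤ ‖e‖ · r · dist(x, K)` where `r = max {‖u‖ : u ∈ C}`. -/
theorem slice_distance_bound {E : Type*}
    [NormedAddCommGroup E] [InnerProductSpace ℝ E] [FiniteDimensional ℝ E]
    (e : E) (he : e ≠ 0) (C : Set E) (hCne : C.Nonempty)
    (hCcp : IsCompact C) (hCcv : Convex ℝ C)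
    (hCH : C ⊆ {x : E | ⟪e, x⟫ = 1})
    (K : Set E) (hK : K = {y : E | ∃ l : ℝ, 0 ≤ l ∧ ∃ u ∈ C, y = l • u})
    (r : ℝ) (hr : IsGreatest ((fun u => ‖u‖) '' C) r) :
    ∀ x : E, ⟪e, x⟫ = 1 → x ∉ -dualCone' K →
      infDist x C ≤ ‖e‖ * r * infDist x K := by
  intro x hx hxK
  have hC1 : ∀ u ∈ C, ⟪e, u⟫ = 1 := fun u hu => hCH hu
  have hex : ∃ u₀ ∈ C, 0 < ⟪x, u₀⟫ := by
    by_contra h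
    push_neg at h
    apply hxK
    rw [Set.mem_neg]
    intro k hk
    rw [hK] at hk
    obtain ⟨l, hl, u, hu, rfl⟩ := hk
    have := h u hu
    rw [inner_neg_left, real_inner_smul_right]
    nlinarith
  obtain ⟨u₀, hu₀C, hu₀⟩ := hex
  have hrub : ∀ u ∈ C, ‖u‖ ≤ r := fun u hu => hr.2 ⟨u, hu, rfl⟩
  have hr0 : (0:ℝ) ≤ r := le_trans (norm_nonneg u₀) (hrub u₀ hu₀C)
  have her : 1 ≤ ‖e‖ * r := by
    have h1 : (1:ℝ) = ⟪e, u₀⟫ := (hC1 u₀ hu₀C).symm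
    have h2 : ⟪e, u₀⟫ ≤ ‖e‖ * ‖u₀‖ := real_inner_le_norm e u₀
    have h3 := hrub u₀ hu₀C
    nlinarith [norm_nonneg e, norm_nonneg u₀]
  have herpos : (0:ℝ) < ‖e‖ * r := lt_of_lt_of_le one_pos her
  have key : ∀ k ∈ K, infDist x C ≤ ‖e‖ * r * dist x k := by
    intro k hk
    rw [hK] at hk
    obtain ⟨l, hl, u, hu, rfl⟩ := hk
    rw [dist_eq_norm]
    by_cases h : 0 < ⟪x, u⟫
    · calc infDist x C ≤ dist x u := infDist_le_dist_of_mem hu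
        _ = ‖x - u‖ := dist_eq_norm x u
        _ ≤ ‖e‖ * ‖u‖ * ‖x - (⟪x, u⟫ / ‖u‖ ^ 2) • u‖ := key_ineq e x u hx (hC1 u hu)
        _ ≤ ‖e‖ * r * ‖x - l • u‖ := by
            have hne : u ≠ 0 := by
              intro h0; rw [h0] at h; simp at h
            have h1 := proj_min x u hne l
            have h2 := hrub u hu
            have h3 : (0:ℝ) ≤ ‖x - (⟪x, u⟫ / ‖u‖ ^ 2) • u‖ := norm_nonneg _
            have h5 := mul_le_mul_of_nonneg_left (mul_le_mul h2 h1 h3 hr0) (norm_nonneg e)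
            nlinarith [h5]
    · push_neg at h
      have hxb : ‖x‖ ≤ ‖x - l • u‖ := by
        have hexp : ‖x - l • u‖ ^ 2 = ‖x‖ ^ 2 - 2 * (l * ⟪x, u⟫) + l ^ 2 * ‖u‖ ^ 2 := by
          rw [norm_sub_sq_real, real_inner_smul_right, norm_smul]
          simp [mul_pow]
          try ring
        refine le_of_pow_le_pow_left₀ two_ne_zero (norm_nonneg _) ?_
        nlinarith [sq_nonneg l, sq_nonneg ‖u‖]
      have hne0 : u₀ ≠ 0 := by
        intro h0; rw [h0] at hu₀; simp at hu₀
      have hproj : ‖x - (⟪x, u₀⟫ / ‖u₀‖ ^ 2) • u₀‖ ≤ ‖x‖ := by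
        have := proj_min x u₀ hne0 0
        simpa using this
      calc infDist x C ≤ dist x u₀ := infDist_le_dist_of_mem hu₀C
        _ = ‖x - u₀‖ := dist_eq_norm x u₀
        _ ≤ ‖e‖ * ‖u₀‖ * ‖x - (⟪x, u₀⟫ / ‖u₀‖ ^ 2) • u₀‖ := key_ineq e x u₀ hx (hC1 u₀ hu₀C)
        _ ≤ ‖e‖ * r * ‖x - l • u‖ := by
            have h2 := hrub u₀ hu₀C
            have h4 : (0:ℝ) ≤ ‖x - (⟪x, u₀⟫ / ‖u₀‖ ^ 2) • u₀‖ := norm_nonneg _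
            have h1 : ‖x - (⟪x, u₀⟫ / ‖u₀‖ ^ 2) • u₀‖ ≤ ‖x - l • u‖ := hproj.trans hxb
            have h5 := mul_le_mul_of_nonneg_left (mul_le_mul h2 h1 h4 hr0) (norm_nonneg e)
            nlinarith [h5]
  have hKne : K.Nonempty := ⟨u₀, by rw [hK]; exact ⟨1, zero_le_one, u₀, hu₀C, by simp⟩⟩
  have hdiv : infDist x C / (‖e‖ * r) ≤ infDist x K := by
    by_contra hlt
    push_neg at hlt
    obtain ⟨y, hy, hdy⟩ := (infDist_lt_iff hKne).mp hlt
    have hk := key y hy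
    have := (lt_div_iff₀ herpos).mp hdy
    nlinarith [hk, this]
  calc infDist x C = infDist x C / (‖e‖ * r) * (‖e‖ * r) := by
        rw [div_mul_cancel₀ _ (ne_of_gt herpos)]
    _ ≤ infDist x K * (‖e‖ * r) := mul_le_mul_of_nonneg_right hdiv (le_of_lt herpos)
    _ = ‖e‖ * r * infDist x K := by ring
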